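/- Let L, compactness, the condition (FG), the submodular function δ, and the descending chain condition (DCC) be as in the context, and assume in addition that δ(x) ≥ 0 for every compact x. Let b ∈ L and let x ≤ b be compact, and set ⌈x⌉ := ⨅{a ∈ L : x ≤ a ≤ b and a is strong in b}. Then ⌈x⌉ is compact, and δ(⌈x⌉) = min{δ(y) : y compact, x ≤ y ≤ b} (in particular this minimum exists). -/

import Mathlib

open CompleteLattice

/-- `a` is strong (self-sufficient) in `b`: for every compact `x ≤ b` and compact
`y ≤ a` there is a compact `y'` with `y ≤ y' ≤ a` and `δ(x ⊔ y') ≥ δ(y')`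
(i.e. the relative predimension `δ(x / a)` is non-negative). -/
def IsStrong {L : Type*} [CompleteLattice L] (δ : L → ℤ) (a b : L) : Prop :=
  ∀ x, IsCompactElement x → x ≤ b → ∀ y, IsCompactElement y → y ≤ a →
    ∃ y', IsCompactElement y' ∧ y ≤ y' ∧ y' ≤ a ∧ δ y' ≤ δ (x ⊔ y')

/-- If `δ` is non-negative, the self-sufficient closure `⌈x⌉_b` of a compact `x ≤ b`
is compact, and `δ(⌈x⌉_b)` is the minimum of `δ(y)` over compact `y` with `x ≤ y ≤ b`. -/
private lemma isCompactElement_sup' {L : Type*} [CompleteLattice L] {a b : L}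
    (ha : IsCompactElement a) (hb : IsCompactElement b) : IsCompactElement (a ⊔ b) := by
  classical
  rw [isCompactElement_iff_exists_le_sSup_of_le_sSup] at ha hb ⊢
  intro s hs
  obtain ⟨t1, ht1, hat1⟩ := ha s (le_sup_left.trans hs)
  obtain ⟨t2, ht2, hbt2⟩ := hb s (le_sup_right.trans hs)
  exact ⟨t1 ∪ t2, by simp [Set.union_subset_iff, ht1, ht2],
    sup_le (hat1.trans (Finset.sup_mono Finset.subset_union_left))
      (hbt2.trans (Finset.sup_mono Finset.subset_union_right))⟩

theorem selfSufficientClosure_compact_and_min {L : Type*} [CompleteLattice L] (δ : L → ℤ)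
    (hFG : ∀ x c : L, IsCompactElement c → x ≤ c → IsCompactElement x)
    (hbot : δ ⊥ = 0)
    (hsub : ∀ x y : L, IsCompactElement x → IsCompactElement y →
      δ (x ⊔ y) + δ (x ⊓ y) ≤ δ x + δ y)
    (hDCC : ¬ ∃ c : ℕ → L, (∀ n, IsCompactElement (c n)) ∧ (∀ n, c (n + 1) < c n) ∧
      ∀ n, IsStrong δ (c (n + 1)) (c n))
    (hpos : ∀ x : L, IsCompactElement x → 0 ≤ δ x)
    (b x : L) (hx : IsCompactElement x) (hxb : x ≤ b) :
    IsCompactElement (sInf {a : L | x ≤ a ∧ a ≤ b ∧ IsStrong δ a b}) ∧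
    IsLeast {m : ℤ | ∃ y : L, IsCompactElement y ∧ x ≤ y ∧ y ≤ b ∧ δ y = m}
      (δ (sInf {a : L | x ≤ a ∧ a ≤ b ∧ IsStrong δ a b})) := by
  classical
  -- the minimum value m of δ on compact elements between x and b
  obtain ⟨m, hmem, hmin⟩ :
      ∃ m : ℤ, (∃ y : L, IsCompactElement y ∧ x ≤ y ∧ y ≤ b ∧ δ y = m) ∧
        ∀ z : ℤ, (∃ y : L, IsCompactElement y ∧ x ≤ y ∧ y ≤ b ∧ δ y = z) → m ≤ z := by
    apply Int.exists_least_of_bdd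
    · exact ⟨0, fun z ⟨y, hyc, _, _, hyz⟩ => hyz ▸ hpos y hyc⟩
    · exact ⟨δ x, x, hx, le_rfl, hxb, rfl⟩
  obtain ⟨y₀, hy₀c, hxy₀, hy₀b, hy₀m⟩ := hmem
  set M : Set L := {y | IsCompactElement y ∧ x ≤ y ∧ y ≤ b ∧ δ y = m} with hM
  have hy₀M : y₀ ∈ M := ⟨hy₀c, hxy₀, hy₀b, hy₀m⟩
  -- any element of M is strong in anything between it and b
  have strongM : ∀ y ∈ M, ∀ t, y ≤ t → t ≤ b → IsStrong δ y t := by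
    rintro y ⟨hyc, hxy, hyb, hym⟩ t hyt htb z hzc hzt w hwc hwy
    refine ⟨y, hyc, hwy, le_rfl, ?_⟩
    rw [hym]
    exact hmin (δ (z ⊔ y)) ⟨z ⊔ y, isCompactElement_sup' hzc hyc, le_trans hxy le_sup_right,
      sup_le (hzt.trans htb) hyb, rfl⟩
  -- M is closed under meets
  have meetM : ∀ y₁ ∈ M, ∀ y₂ ∈ M, y₁ ⊓ y₂ ∈ M := by
    rintro y₁ ⟨h1c, h1x, h1b, h1m⟩ y₂ ⟨h2c, h2x, h2b, h2m⟩
    have hic : IsCompactElement (y₁ ⊓ y₂) := hFG _ y₁ h1c inf_le_left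
    have hsc : IsCompactElement (y₁ ⊔ y₂) := isCompactElement_sup' h1c h2c
    have h1 : m ≤ δ (y₁ ⊔ y₂) :=
      hmin _ ⟨y₁ ⊔ y₂, hsc, le_trans h1x le_sup_left, sup_le h1b h2b, rfl⟩
    have h2 : m ≤ δ (y₁ ⊓ y₂) :=
      hmin _ ⟨y₁ ⊓ y₂, hic, le_inf h1x h2x, le_trans inf_le_left h1b, rfl⟩
    have h3 := hsub y₁ y₂ h1c h2c
    exact ⟨hic, le_inf h1x h2x, le_trans inf_le_left h1b, by omega⟩
  -- M has a minimal element, by DCC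
  have hminimal : ∃ y ∈ M, ∀ y' ∈ M, ¬ y' < y := by
    by_contra h
    push_neg at h
    choose f hfM hflt using h
    let g : {y // y ∈ M} → {y // y ∈ M} := fun p => ⟨f p.1 p.2, hfM p.1 p.2⟩
    let c : ℕ → {y // y ∈ M} := fun n => g^[n] ⟨y₀, hy₀M⟩
    have hsucc : ∀ n, c (n + 1) = g (c n) := fun n => Function.iterate_succ_apply' g n _
    apply hDCC
    refine ⟨fun n => (c n).1, fun n => (c n).2.1, fun n => ?_, fun n => ?_⟩
    · show ((c (n + 1) : {y // y ∈ M}) : L) < c n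
      rw [hsucc]; exact hflt _ _
    · have hlt : (c (n + 1)).1 < (c n).1 := by rw [hsucc]; exact hflt _ _
      exact strongM _ (c (n + 1)).2 _ hlt.le (c n).2.2.2.1
  obtain ⟨y₁, hy₁M, hy₁min⟩ := hminimal
  -- y₁ is the least element of M
  have hleast : ∀ y ∈ M, y₁ ≤ y := by
    intro y hy
    have hmem := meetM y₁ hy₁M y hy
    have : ¬ y₁ ⊓ y < y₁ := hy₁min _ hmem
    have heq : y₁ ⊓ y = y₁ := by
      by_contra hne
      exact this (lt_of_le_of_ne inf_le_left hne)
    calc y₁ = y₁ ⊓ y := heq.symm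
      _ ≤ y := inf_le_right
  obtain ⟨hy₁c, hxy₁, hy₁b, hy₁m⟩ := hy₁M
  -- y₁ belongs to the set S of strong elements above x
  have hy₁S : y₁ ∈ {a : L | x ≤ a ∧ a ≤ b ∧ IsStrong δ a b} :=
    ⟨hxy₁, hy₁b, strongM y₁ ⟨hy₁c, hxy₁, hy₁b, hy₁m⟩ b hy₁b le_rfl⟩
  -- y₁ is below every element of S
  have hy₁le : ∀ a ∈ {a : L | x ≤ a ∧ a ≤ b ∧ IsStrong δ a b}, y₁ ≤ a := by
    rintro a ⟨hxa, hab, hstr⟩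
    obtain ⟨y', hy'c, hxy', hy'a, hδ⟩ := hstr y₁ hy₁c hy₁b x hx hxa
    have hic : IsCompactElement (y₁ ⊓ y') := hFG _ y₁ hy₁c inf_le_left
    have h3 := hsub y₁ y' hy₁c hy'c
    have h2 : m ≤ δ (y₁ ⊓ y') :=
      hmin _ ⟨y₁ ⊓ y', hic, le_inf hxy₁ hxy', le_trans inf_le_left hy₁b, rfl⟩
    have hwM : y₁ ⊓ y' ∈ M :=
      ⟨hic, le_inf hxy₁ hxy', le_trans inf_le_left hy₁b, by omega⟩
    exact le_trans (le_trans (hleast _ hwM) inf_le_right) hy'a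
  -- hence the closure is y₁
  have hEq : sInf {a : L | x ≤ a ∧ a ≤ b ∧ IsStrong δ a b} = y₁ :=
    le_antisymm (sInf_le hy₁S) (le_sInf hy₁le)
  rw [hEq]
  exact ⟨hy₁c, ⟨y₁, hy₁c, hxy₁, hy₁b, rfl⟩,
    fun z ⟨y, hyc, hxy, hyb, hyz⟩ => hy₁m ▸ hmin z ⟨y, hyc, hxy, hyb, hyz⟩⟩
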